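/- Let M ≥ 1 be an integer, T > 0, τ ∈ (0, T], and let s : ℝ → ℝ be square-integrable with s = 0 almost everywhere outside [0, MT] and ∫_ℝ s(t)² dt = 1. Set f₁(t) = s(t), f₂(t) = s(t−τ), F_j(t, ω) = Σ_{k=0}^{M} f_j(t+kT)·e^{−ikω}, and let T(ω) = ∫₀^T F(t,ω)·F(t,ω)^† dt be the associated 2×2 Gram matrix, where F(t,ω) = (F₁(t,ω), F₂(t,ω))ᵀ. Suppose that for every ω ∈ [−π, π] the functions t ↦ F₁(t,ω) and t ↦ F₂(t,ω), restricted to [0, T], are linearly independent as elements of L²([0,T]; ℂ). Then there exists λ_min > 0 such that for every ω ∈ [−π, π] and every b ∈ ℂ² with ‖b‖ = 1, λ_min ≤ b^† T(ω) b ≤ 2(2M+1). -/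

import Mathlib

open MeasureTheory Real Matrix

lemma aux_l2_mul {α : Type*} [MeasurableSpace α] {μ : Measure α} {𝕜 : Type*} [RCLike 𝕜]
    {f g : α → 𝕜} (hf : MemLp f 2 μ) (hg : MemLp g 2 μ) :
    Integrable (fun x => f x * g x) μ := by
  rw [← memLp_one_iff_integrable]
  have := hg.smul (φ := f) hf (r := 1)
  exact this

lemma aux_conj_memLp {α : Type*} [MeasurableSpace α] {μ : Measure α}
    {f : α → ℂ} (hf : MemLp f 2 μ) :
    MemLp (fun x => (starRingEnd ℂ) (f x)) 2 μ := by
  refine MemLp.of_le hf (Complex.continuous_conj.comp_aestronglyMeasurable hf.1) ?_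
  filter_upwards with x
  simp

lemma aux_transl {f : ℝ → ℝ} (hf : MemLp f 2 (volume : Measure ℝ)) (a : ℝ) :
    MemLp (fun t => f (t + a)) 2 (volume : Measure ℝ) :=
  hf.comp_measurePreserving (measurePreserving_add_right volume a)

lemma aux_integrable_ofReal {α : Type*} [MeasurableSpace α] {μ : Measure α}
    {f : α → ℝ} (hf : Integrable f μ) :
    Integrable (fun x => ((f x : ℝ) : ℂ)) μ := by
  have h := hf.ofReal (𝕜 := ℂ)
  rwa [show (RCLike.ofReal : ℝ → ℂ) = Complex.ofReal from rfl] at h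

lemma aux_ofReal_memLp {α : Type*} [MeasurableSpace α] {μ : Measure α}
    {f : α → ℝ} (hf : MemLp f 2 μ) :
    MemLp (fun x => ((f x : ℝ) : ℂ)) 2 μ :=
  Complex.ofRealCLM.comp_memLp' hf

/-- if for every `ω ∈ [-π, π]` the folded waveforms `F₁(·,ω)`,
`F₂(·,ω)` are linearly independent in `L²([0,T]; ℂ)`, then the quadratic form of
the Gram matrix `T(ω)` is bounded below by some `λ_min > 0` uniformly in `ω` and
above by `2(2M+1)`, on unit vectors `b ∈ ℂ²`. -/
theorem stmt_15 (M : ℕ) (hM : 1 ≤ M) (T τ : ℝ) (hT : 0 < T) (hτ : τ ∈ Set.Ioc 0 T)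
    (s : ℝ → ℝ) (hs : MemLp s 2 (volume : Measure ℝ))
    (hsupp : ∀ᵐ t : ℝ, t ∉ Set.Icc 0 ((M : ℝ) * T) → s t = 0)
    (hnorm : ∫ t : ℝ, (s t)^2 = 1)
    (f : Fin 2 → ℝ → ℝ) (hf0 : f 0 = s) (hf1 : f 1 = fun t => s (t - τ))
    (F : Fin 2 → ℝ → ℝ → ℂ)
    (hF : ∀ (j : Fin 2) (t ω : ℝ), F j t ω =
      ∑ k ∈ Finset.range (M + 1),
        ((f j (t + (k : ℝ) * T) : ℝ) : ℂ) * Complex.exp (-((k : ℂ) * ω * Complex.I)))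
    (Tm : ℝ → Matrix (Fin 2) (Fin 2) ℂ)
    (hTm : ∀ (ω : ℝ) (j l : Fin 2), Tm ω j l =
      ∫ t in Set.Icc (0 : ℝ) T, F j t ω * (starRingEnd ℂ) (F l t ω))
    (hLI : ∀ ω ∈ Set.Icc (-π) π, ∀ c₁ c₂ : ℂ,
      (∀ᵐ t ∂(volume.restrict (Set.Icc (0 : ℝ) T)),
        c₁ * F 0 t ω + c₂ * F 1 t ω = 0) → c₁ = 0 ∧ c₂ = 0) :
    ∃ lmin : ℝ, 0 < lmin ∧
      ∀ ω ∈ Set.Icc (-π) π, ∀ b : Fin 2 → ℂ,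
        ‖b 0‖ ^ 2 + ‖b 1‖ ^ 2 = 1 →
          lmin ≤ (dotProduct (star b) ((Tm ω).mulVec b)).re ∧
          (dotProduct (star b) ((Tm ω).mulVec b)).re ≤ 2 * (2 * (M : ℝ) + 1) := by
  obtain ⟨hτ0, hτT⟩ := hτ
  have hexp1 : ∀ (k : ℕ) (ω : ℝ), ‖Complex.exp (-((k : ℂ) * ω * Complex.I))‖ = 1 := by
    intro k ω
    simp [Complex.norm_exp, Complex.mul_re, Complex.mul_im]
  -- basic L² facts about translates of f j
  have hfLp : ∀ (j : Fin 2) (a : ℝ), MemLp (fun t => f j (t + a)) 2 (volume : Measure ℝ) := by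
    intro j a
    fin_cases j
    · simpa [hf0] using aux_transl hs a
    · simpa [hf1, add_sub_assoc] using aux_transl hs (a - τ)
  have hfLp0 : ∀ (j : Fin 2), MemLp (f j) 2 (volume : Measure ℝ) := by
    intro j; simpa using hfLp j 0
  -- F j (·, ω) is in L²
  have hFLp : ∀ (j : Fin 2) (ω : ℝ), MemLp (fun t => F j t ω) 2 (volume : Measure ℝ) := by
    intro j ω
    have : (fun t => F j t ω) = fun t =>
        ∑ k ∈ Finset.range (M + 1),
          ((f j (t + (k : ℝ) * T) : ℝ) : ℂ) * Complex.exp (-((k : ℂ) * ω * Complex.I)) := by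
      funext t; exact hF j t ω
    rw [this]
    refine memLp_finset_sum _ (fun k _ => ?_)
    refine MemLp.of_le (aux_ofReal_memLp (hfLp j ((k : ℝ) * T)))
      ((Complex.continuous_ofReal.comp_aestronglyMeasurable (hfLp j _).1).mul_const _) ?_
    filter_upwards with t
    rw [norm_mul]
    simp [hexp1]
  -- products F j ⋅ conj (F l) are integrable on [0,T]
  have hFint : ∀ (j l : Fin 2) (ω : ℝ),
      Integrable (fun t => F j t ω * (starRingEnd ℂ) (F l t ω))
        (volume.restrict (Set.Icc (0 : ℝ) T)) := fun j l ω =>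
    aux_l2_mul ((hFLp j ω).restrict _) ((aux_conj_memLp (hFLp l ω)).restrict _)
  -- the combined function g
  set g : ℝ → (Fin 2 → ℂ) → ℝ → ℂ := fun ω b t =>
    (starRingEnd ℂ) (b 0) * F 0 t ω + (starRingEnd ℂ) (b 1) * F 1 t ω with hg_def
  have hgLp : ∀ (ω : ℝ) (b : Fin 2 → ℂ), MemLp (g ω b) 2 (volume : Measure ℝ) := by
    intro ω b
    exact ((hFLp 0 ω).const_mul _).add ((hFLp 1 ω).const_mul _)
  have hgInt : ∀ (ω : ℝ) (b : Fin 2 → ℂ),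
      Integrable (fun t => Complex.normSq (g ω b t)) (volume.restrict (Set.Icc (0 : ℝ) T)) := by
    intro ω b
    have h1 : Integrable (fun t => g ω b t * (starRingEnd ℂ) (g ω b t))
        (volume.restrict (Set.Icc (0 : ℝ) T)) :=
      aux_l2_mul ((hgLp ω b).restrict _) ((aux_conj_memLp (hgLp ω b)).restrict _)
    have := h1.re
    refine this.congr ?_
    filter_upwards with t
    simp [Complex.mul_conj]
  -- the quadratic form as an integral
  have hQre : ∀ (ω : ℝ) (b : Fin 2 → ℂ),
      (dotProduct (star b) ((Tm ω).mulVec b)).re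
        = ∫ t in Set.Icc (0 : ℝ) T, Complex.normSq (g ω b t) := by
    intro ω b
    have key : dotProduct (star b) ((Tm ω).mulVec b)
        = ∫ t in Set.Icc (0 : ℝ) T, g ω b t * (starRingEnd ℂ) (g ω b t) := by
      have hpt : ∀ t : ℝ, g ω b t * (starRingEnd ℂ) (g ω b t)
          = ∑ j : Fin 2, ∑ l : Fin 2,
              (starRingEnd ℂ) (b j) * b l * (F j t ω * (starRingEnd ℂ) (F l t ω)) := by
        intro t
        simp only [hg_def, map_add, _root_.map_mul, Complex.conj_conj, Fin.sum_univ_two]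
        ring
      have h2 : ∫ t in Set.Icc (0 : ℝ) T, g ω b t * (starRingEnd ℂ) (g ω b t)
          = ∑ j : Fin 2, ∑ l : Fin 2,
              (starRingEnd ℂ) (b j) * b l
                * ∫ t in Set.Icc (0 : ℝ) T, F j t ω * (starRingEnd ℂ) (F l t ω) := by
        simp only [hpt]
        rw [integral_finset_sum _ (fun j _ => integrable_finset_sum _
          (fun l _ => ((hFint j l ω).const_mul _)))]
        refine Finset.sum_congr rfl fun j _ => ?_
        rw [integral_finset_sum _ (fun l _ => ((hFint j l ω).const_mul _))]
        exact Finset.sum_congr rfl fun l _ => integral_const_mul _ _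
      rw [h2]
      simp only [dotProduct, Matrix.mulVec, Fin.sum_univ_two, Pi.star_apply,
        RCLike.star_def, hTm]
      ring
    rw [key]
    have : (fun t => g ω b t * (starRingEnd ℂ) (g ω b t))
        = fun t => ((Complex.normSq (g ω b t) : ℝ) : ℂ) := by
      funext t; exact Complex.mul_conj _
    rw [this]
    have h4 := integral_ofReal (𝕜 := ℂ) (f := fun t => Complex.normSq (g ω b t))
      (μ := volume.restrict (Set.Icc (0 : ℝ) T))
    rw [show (RCLike.ofReal : ℝ → ℂ) = Complex.ofReal from rfl] at h4
    rw [h4, Complex.ofReal_re]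
  -- integrability of real products on [0,T]
  have hprodInt : ∀ (j l : Fin 2) (k k' : ℕ),
      Integrable (fun t => f j (t + (k : ℝ) * T) * f l (t + (k' : ℝ) * T))
        (volume.restrict (Set.Icc (0 : ℝ) T)) :=
    fun j l k k' => Integrable.restrict
      (aux_l2_mul (𝕜 := ℝ) (hfLp j ((k : ℝ) * T)) (hfLp l ((k' : ℝ) * T)))
  -- Tm entries as finite sums of continuous functions of ω
  have hTmEq : ∀ (ω : ℝ) (j l : Fin 2), Tm ω j l
      = ∑ k ∈ Finset.range (M + 1), ∑ k' ∈ Finset.range (M + 1),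
          (Complex.exp (-((k : ℂ) * ω * Complex.I))
            * (starRingEnd ℂ) (Complex.exp (-((k' : ℂ) * ω * Complex.I))))
          * (((∫ t in Set.Icc (0 : ℝ) T, f j (t + (k : ℝ) * T) * f l (t + (k' : ℝ) * T)) : ℝ) : ℂ) := by
    intro ω j l
    rw [hTm]
    have hpt : ∀ t : ℝ, F j t ω * (starRingEnd ℂ) (F l t ω)
        = ∑ k ∈ Finset.range (M + 1), ∑ k' ∈ Finset.range (M + 1),
            (Complex.exp (-((k : ℂ) * ω * Complex.I))
              * (starRingEnd ℂ) (Complex.exp (-((k' : ℂ) * ω * Complex.I))))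
            * (((f j (t + (k : ℝ) * T) * f l (t + (k' : ℝ) * T) : ℝ)) : ℂ) := by
      intro t
      rw [hF, hF, map_sum, Finset.sum_mul_sum]
      refine Finset.sum_congr rfl fun k _ => Finset.sum_congr rfl fun k' _ => ?_
      simp only [_root_.map_mul, Complex.conj_ofReal]
      push_cast
      ring
    simp only [hpt]
    rw [integral_finset_sum _ (fun k _ => integrable_finset_sum _
      (fun k' _ => ((aux_integrable_ofReal (hprodInt j l k k')).const_mul _)))]
    refine Finset.sum_congr rfl fun k _ => ?_
    rw [integral_finset_sum _ (fun k' _ => ((aux_integrable_ofReal (hprodInt j l k k')).const_mul _))]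
    refine Finset.sum_congr rfl fun k' _ => ?_
    rw [integral_const_mul]
    congr 1
    have h4 := integral_ofReal (𝕜 := ℂ)
      (f := fun t => f j (t + (k : ℝ) * T) * f l (t + (k' : ℝ) * T))
      (μ := volume.restrict (Set.Icc (0 : ℝ) T))
    rw [show (RCLike.ofReal : ℝ → ℂ) = Complex.ofReal from rfl] at h4
    exact h4
  have hTmc : ∀ (j l : Fin 2), Continuous fun ω => Tm ω j l := by
    intro j l
    rw [show (fun ω => Tm ω j l) = _ from funext fun ω => hTmEq ω j l]
    refine continuous_finset_sum _ fun k _ => continuous_finset_sum _ fun k' _ => ?_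
    refine Continuous.mul (Continuous.mul ?_ ?_) continuous_const
    · exact Complex.continuous_exp.comp (by fun_prop)
    · exact continuous_star.comp (Complex.continuous_exp.comp (by fun_prop))
  -- the quadratic form is continuous in (ω, b)
  set Qc : ℝ × (Fin 2 → ℂ) → ℝ :=
    fun p => (dotProduct (star p.2) ((Tm p.1).mulVec p.2)).re with hQc_def
  have hQcont : Continuous Qc := by
    have hexp : Qc = fun p => (star (p.2 0) * (Tm p.1 0 0 * p.2 0 + Tm p.1 0 1 * p.2 1)
        + star (p.2 1) * (Tm p.1 1 0 * p.2 0 + Tm p.1 1 1 * p.2 1)).re := by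
      funext p
      simp [hQc_def, dotProduct, Matrix.mulVec, Fin.sum_univ_two]
    rw [hexp]
    have h2 : ∀ i : Fin 2, Continuous fun p : ℝ × (Fin 2 → ℂ) => p.2 i :=
      fun i => (continuous_apply i).comp continuous_snd
    have hTc : ∀ j l : Fin 2, Continuous fun p : ℝ × (Fin 2 → ℂ) => Tm p.1 j l :=
      fun j l => (hTmc j l).comp continuous_fst
    exact Complex.continuous_re.comp
      ((((continuous_star.comp (h2 0)).mul
          (((hTc 0 0).mul (h2 0)).add ((hTc 0 1).mul (h2 1))))).add
        ((continuous_star.comp (h2 1)).mul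
          (((hTc 1 0).mul (h2 0)).add ((hTc 1 1).mul (h2 1)))))
  -- positivity of the quadratic form on the constraint set
  have hpos : ∀ ω ∈ Set.Icc (-π) π, ∀ b : Fin 2 → ℂ,
      ‖b 0‖ ^ 2 + ‖b 1‖ ^ 2 = 1 →
      0 < (dotProduct (star b) ((Tm ω).mulVec b)).re := by
    intro ω hω b hb
    rw [hQre]
    rcases lt_or_eq_of_le (integral_nonneg (μ := volume.restrict (Set.Icc (0 : ℝ) T))
      (f := fun t => Complex.normSq (g ω b t)) (fun t => Complex.normSq_nonneg (g ω b t))) with h | h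
    · exact h
    · exfalso
      have hz := (integral_eq_zero_iff_of_nonneg
        (fun t => Complex.normSq_nonneg (g ω b t)) (hgInt ω b)).mp h.symm
      have hae : ∀ᵐ t ∂(volume.restrict (Set.Icc (0 : ℝ) T)),
          (starRingEnd ℂ) (b 0) * F 0 t ω + (starRingEnd ℂ) (b 1) * F 1 t ω = 0 := by
        filter_upwards [hz] with t ht
        have h0 : Complex.normSq (g ω b t) = 0 := ht
        simpa [hg_def] using Complex.normSq_eq_zero.mp h0
      obtain ⟨h0, h1⟩ := hLI ω hω _ _ hae
      rw [map_eq_zero] at h0 h1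
      rw [h0, h1] at hb
      simp at hb
  -- the constraint sphere is compact
  set S : Set (Fin 2 → ℂ) :=
    {b | ‖b 0‖ ^ 2 + ‖b 1‖ ^ 2 = 1} with hS_def
  have hScont : Continuous fun b : Fin 2 → ℂ =>
      ‖b 0‖ ^ 2 + ‖b 1‖ ^ 2 :=
    ((continuous_norm.comp (continuous_apply 0)).pow 2).add
      ((continuous_norm.comp (continuous_apply 1)).pow 2)
  have hSclosed : IsClosed S := isClosed_eq hScont continuous_const
  have hSc : IsCompact S := by
    refine (isCompact_closedBall (0 : Fin 2 → ℂ) 1).of_isClosed_subset hSclosed ?_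
    intro b hb
    have hb' : ‖b 0‖ ^ 2 + ‖b 1‖ ^ 2 = 1 := hb
    rw [Metric.mem_closedBall, dist_zero_right]
    rw [pi_norm_le_iff_of_nonneg zero_le_one]
    intro i
    fin_cases i
    · show ‖b 0‖ ≤ 1
      nlinarith [norm_nonneg (b 0), norm_nonneg (b 1),
        sq_nonneg (‖b 0‖ - 1), sq_nonneg (‖b 1‖)]
    · show ‖b 1‖ ≤ 1
      nlinarith [norm_nonneg (b 0), norm_nonneg (b 1),
        sq_nonneg (‖b 1‖ - 1), sq_nonneg (‖b 0‖)]
  set K : Set (ℝ × (Fin 2 → ℂ)) := Set.Icc (-π) π ×ˢ S with hK_def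
  have hKc : IsCompact K := isCompact_Icc.prod hSc
  have hKne : K.Nonempty := by
    refine ⟨(0, ![1, 0]), Set.mk_mem_prod ?_ ?_⟩
    · exact ⟨by linarith [Real.pi_pos], by linarith [Real.pi_pos]⟩
    · show ‖![(1 : ℂ), 0] 0‖ ^ 2 + ‖![(1 : ℂ), 0] 1‖ ^ 2 = 1
      simp
  obtain ⟨p₀, hp₀K, hmin⟩ := hKc.exists_isMinOn hKne hQcont.continuousOn
  -- the key upper bound: ∑_k ∫_{[0,T]} f j (t + kT)² ≤ 1
  have hchange : ∀ (j : Fin 2) (k : ℕ), (∫ t in Set.Icc (0 : ℝ) T, (f j (t + (k : ℝ) * T)) ^ 2)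
      = ∫ u in Set.Ioc ((k : ℝ) * T) (T + (k : ℝ) * T), (f j u) ^ 2 := by
    intro j k
    calc (∫ t in Set.Icc (0 : ℝ) T, (f j (t + (k : ℝ) * T)) ^ 2)
        = ∫ t in Set.Ioc (0 : ℝ) T, (f j (t + (k : ℝ) * T)) ^ 2 :=
          integral_Icc_eq_integral_Ioc
      _ = ∫ t in (0 : ℝ)..T, (f j (t + (k : ℝ) * T)) ^ 2 :=
          (intervalIntegral.integral_of_le hT.le).symm
      _ = ∫ u in (0 + (k : ℝ) * T)..(T + (k : ℝ) * T), (f j u) ^ 2 :=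
          intervalIntegral.integral_comp_add_right (fun u => (f j u) ^ 2) _
      _ = ∫ u in Set.Ioc ((k : ℝ) * T) (T + (k : ℝ) * T), (f j u) ^ 2 := by
          rw [zero_add]
          exact intervalIntegral.integral_of_le (by nlinarith [hT.le, Nat.cast_nonneg (α := ℝ) k])
  have hnorm' : ∀ j : Fin 2, (∫ u : ℝ, (f j u) ^ 2) = 1 := by
    intro j
    fin_cases j
    · show (∫ u : ℝ, (f 0 u) ^ 2) = 1
      simpa [hf0] using hnorm
    · show (∫ u : ℝ, (f 1 u) ^ 2) = 1
      simp only [hf1]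
      simpa using (integral_sub_right_eq_self (fun u => (s u) ^ 2) τ).trans hnorm
  have hkey : ∀ j : Fin 2,
      (∑ k ∈ Finset.range (M + 1), ∫ t in Set.Icc (0 : ℝ) T, (f j (t + (k : ℝ) * T)) ^ 2) ≤ 1 := by
    intro j
    refine le_trans (le_of_eq (Finset.sum_congr rfl fun k _ => hchange j k)) ?_
    have hdisj : (↑(Finset.range (M + 1)) : Set ℕ).Pairwise
        (Function.onFun Disjoint fun k : ℕ => Set.Ioc ((k : ℝ) * T) (T + (k : ℝ) * T)) := by
      intro a _ c _ hac
      refine Set.Ioc_disjoint_Ioc.mpr ?_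
      rcases lt_or_gt_of_ne hac with h | h
      · have hc : (a : ℝ) + 1 ≤ (c : ℝ) := by exact_mod_cast h
        exact le_trans (min_le_left _ _) (le_max_iff.mpr (Or.inr (by nlinarith)))
      · have hc : (c : ℝ) + 1 ≤ (a : ℝ) := by exact_mod_cast h
        exact le_trans (min_le_right _ _) (le_max_iff.mpr (Or.inl (by nlinarith)))
    have hun := integral_biUnion_finset (μ := (volume : Measure ℝ))
      (f := fun u => (f j u) ^ 2) (Finset.range (M + 1))
      (fun k _ => measurableSet_Ioc) hdisj
      (fun k _ => (hfLp0 j).integrable_sq.integrableOn)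
    rw [← hun]
    calc (∫ u in ⋃ k ∈ Finset.range (M + 1), Set.Ioc ((k : ℝ) * T) (T + (k : ℝ) * T), (f j u) ^ 2)
        ≤ ∫ u : ℝ, (f j u) ^ 2 :=
          setIntegral_le_integral (hfLp0 j).integrable_sq
            (Filter.Eventually.of_forall fun u => sq_nonneg _)
      _ = 1 := hnorm' j
  refine ⟨Qc p₀, hpos p₀.1 hp₀K.1 p₀.2 hp₀K.2, ?_⟩
  intro ω hω b hb
  constructor
  · exact isMinOn_iff.mp hmin (ω, b) ⟨hω, hb⟩
  -- upper bound
  rw [hQre]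
  have hFb : ∀ (j : Fin 2) (t : ℝ), ‖F j t ω‖ ^ 2
      ≤ ((M : ℝ) + 1) * ∑ k ∈ Finset.range (M + 1), (f j (t + (k : ℝ) * T)) ^ 2 := by
    intro j t
    have h1 : ‖F j t ω‖ ≤ ∑ k ∈ Finset.range (M + 1), |f j (t + (k : ℝ) * T)| := by
      rw [hF]
      refine (norm_sum_le _ _).trans_eq ?_
      refine Finset.sum_congr rfl fun k _ => ?_
      rw [norm_mul, hexp1, mul_one, Complex.norm_real, Real.norm_eq_abs]
    have h2 : ‖F j t ω‖ ^ 2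
        ≤ (∑ k ∈ Finset.range (M + 1), |f j (t + (k : ℝ) * T)|) ^ 2 :=
      pow_le_pow_left₀ (norm_nonneg _) h1 2
    refine h2.trans ?_
    have h3 := sq_sum_le_card_mul_sum_sq (s := Finset.range (M + 1))
      (f := fun k => |f j (t + (k : ℝ) * T)|)
    simp only [Finset.card_range, sq_abs] at h3
    calc (∑ k ∈ Finset.range (M + 1), |f j (t + (k : ℝ) * T)|) ^ 2
        ≤ ((M + 1 : ℕ) : ℝ) * ∑ k ∈ Finset.range (M + 1), (f j (t + (k : ℝ) * T)) ^ 2 := h3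
      _ = ((M : ℝ) + 1) * ∑ k ∈ Finset.range (M + 1), (f j (t + (k : ℝ) * T)) ^ 2 := by
          push_cast; ring
  have hpt : ∀ t : ℝ, Complex.normSq (g ω b t)
      ≤ ((M : ℝ) + 1) * ((∑ k ∈ Finset.range (M + 1), (f 0 (t + (k : ℝ) * T)) ^ 2)
        + ∑ k ∈ Finset.range (M + 1), (f 1 (t + (k : ℝ) * T)) ^ 2) := by
    intro t
    have habs : ‖g ω b t‖
        ≤ ‖b 0‖ * ‖F 0 t ω‖
          + ‖b 1‖ * ‖F 1 t ω‖ := by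
      simp only [hg_def]
      refine (norm_add_le _ _).trans_eq ?_
      simp [_root_.map_mul]
    have hCS : (‖b 0‖ * ‖F 0 t ω‖
          + ‖b 1‖ * ‖F 1 t ω‖) ^ 2
        ≤ (‖b 0‖ ^ 2 + ‖b 1‖ ^ 2)
          * (‖F 0 t ω‖ ^ 2 + ‖F 1 t ω‖ ^ 2) := by
      nlinarith [sq_nonneg (‖b 0‖ * ‖F 1 t ω‖
        - ‖b 1‖ * ‖F 0 t ω‖)]
    have hns : Complex.normSq (g ω b t) = ‖g ω b t‖ ^ 2 := (Complex.sq_norm _).symm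
    rw [hns]
    calc ‖g ω b t‖ ^ 2
        ≤ (‖b 0‖ * ‖F 0 t ω‖
            + ‖b 1‖ * ‖F 1 t ω‖) ^ 2 :=
          pow_le_pow_left₀ (norm_nonneg _) habs 2
      _ ≤ (‖b 0‖ ^ 2 + ‖b 1‖ ^ 2)
            * (‖F 0 t ω‖ ^ 2 + ‖F 1 t ω‖ ^ 2) := hCS
      _ = ‖F 0 t ω‖ ^ 2 + ‖F 1 t ω‖ ^ 2 := by rw [hb, one_mul]
      _ ≤ ((M : ℝ) + 1) * ((∑ k ∈ Finset.range (M + 1), (f 0 (t + (k : ℝ) * T)) ^ 2)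
            + ∑ k ∈ Finset.range (M + 1), (f 1 (t + (k : ℝ) * T)) ^ 2) := by
          rw [mul_add]
          exact add_le_add (hFb 0 t) (hFb 1 t)
  have hSint : ∀ j : Fin 2, Integrable
      (fun t => ∑ k ∈ Finset.range (M + 1), (f j (t + (k : ℝ) * T)) ^ 2)
      (volume.restrict (Set.Icc (0 : ℝ) T)) :=
    fun j => integrable_finset_sum _ fun k _ => ((hfLp j _).integrable_sq.restrict)
  have hH : Integrable (fun t => ((M : ℝ) + 1)
      * ((∑ k ∈ Finset.range (M + 1), (f 0 (t + (k : ℝ) * T)) ^ 2)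
        + ∑ k ∈ Finset.range (M + 1), (f 1 (t + (k : ℝ) * T)) ^ 2))
      (volume.restrict (Set.Icc (0 : ℝ) T)) :=
    (((hSint 0).add (hSint 1)).const_mul _)
  have hmono := integral_mono (hgInt ω b) hH (fun t => hpt t)
  refine hmono.trans ?_
  rw [integral_const_mul, integral_add (hSint 0) (hSint 1),
    integral_finset_sum _ (fun k _ => ((hfLp 0 _).integrable_sq.restrict)),
    integral_finset_sum _ (fun k _ => ((hfLp 1 _).integrable_sq.restrict))]
  have hM0 : (0 : ℝ) ≤ (M : ℝ) := Nat.cast_nonneg M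
  have hS0nn : (0 : ℝ) ≤ ∑ k ∈ Finset.range (M + 1),
      ∫ t in Set.Icc (0 : ℝ) T, (f 0 (t + (k : ℝ) * T)) ^ 2 :=
    Finset.sum_nonneg fun k _ => integral_nonneg fun t => sq_nonneg _
  have hS1nn : (0 : ℝ) ≤ ∑ k ∈ Finset.range (M + 1),
      ∫ t in Set.Icc (0 : ℝ) T, (f 1 (t + (k : ℝ) * T)) ^ 2 :=
    Finset.sum_nonneg fun k _ => integral_nonneg fun t => sq_nonneg _
  nlinarith [hkey 0, hkey 1]
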